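/- Let C_n be the cycle graph on n vertices (n ≥ 5) and let X be the number of crossings of a uniformly random embedding of C_n. Then E[X] = n(n−3)/6. -/

import Mathlib

open Finset

namespace RandomCrossings

/-- `z` lies strictly between `x` and `y`. -/
def Btw {n : ℕ} (x y z : Fin n) : Prop := min x y < z ∧ z < max x y

instance {n : ℕ} (x y z : Fin n) : Decidable (Btw x y z) :=
  inferInstanceAs (Decidable (_ ∧ _))

/-- The pair of edges `s` forms a crossing under the embedding `π`:
there is a labelling of `s` as `{{a,b},{c,d}}` such that exactly one of
`π c`, `π d` lies strictly between `π a` and `π b`. -/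
def IsCrossing {n : ℕ} (π : Equiv.Perm (Fin n)) (s : Finset (Sym2 (Fin n))) : Prop :=
  ∃ a b c d : Fin n,
    s = {Sym2.mk a b, Sym2.mk c d} ∧
      Xor' (Btw (π a) (π b) (π c)) (Btw (π a) (π b) (π d))

instance {n : ℕ} (π : Equiv.Perm (Fin n)) (s : Finset (Sym2 (Fin n))) :
    Decidable (IsCrossing π s) := by
  unfold IsCrossing Xor'; infer_instance

/-- The set of `r`-matchings of `G`: sets of `r` pairwise vertex-disjoint edges. -/
def matchings {n : ℕ} (G : SimpleGraph (Fin n)) [DecidableRel G.Adj] (r : ℕ) :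
    Finset (Finset (Sym2 (Fin n))) :=
  (G.edgeFinset.powersetCard r).filter
    (fun s => ∀ e ∈ s, ∀ f ∈ s, e ≠ f → ∀ v : Fin n, ¬(v ∈ e ∧ v ∈ f))

/-- `mMatch G r` is the number of `r`-matchings of `G`. -/
def mMatch {n : ℕ} (G : SimpleGraph (Fin n)) [DecidableRel G.Adj] (r : ℕ) : ℕ :=
  (matchings G r).card

/-- The number of crossings of the embedding of `G` given by the permutation `π`. -/
def crossingNumber {n : ℕ} (G : SimpleGraph (Fin n)) [DecidableRel G.Adj]
    (π : Equiv.Perm (Fin n)) : ℕ :=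
  ((matchings G 2).filter (fun s => IsCrossing π s)).card

/-- Probability of an event under a uniformly random permutation of `Fin n`. -/
noncomputable def prob {n : ℕ} (p : Equiv.Perm (Fin n) → Prop) : ℝ := by
  classical
  exact ((Finset.univ.filter p).card : ℝ) / (Fintype.card (Equiv.Perm (Fin n)) : ℝ)

/-- Expectation of a real random variable of a uniformly random permutation of `Fin n`. -/
noncomputable def expect {n : ℕ} (f : Equiv.Perm (Fin n) → ℝ) : ℝ :=
  (∑ π : Equiv.Perm (Fin n), f π) / (Fintype.card (Equiv.Perm (Fin n)) : ℝ)

/-- The mean number of crossings of a uniformly random embedding of `G`. -/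
noncomputable def meanX {n : ℕ} (G : SimpleGraph (Fin n)) [DecidableRel G.Adj] : ℝ :=
  expect (fun π => (crossingNumber G π : ℝ))

/-- The variance of the number of crossings of a uniformly random embedding of `G`. -/
noncomputable def varX {n : ℕ} (G : SimpleGraph (Fin n)) [DecidableRel G.Adj] : ℝ :=
  expect (fun π => ((crossingNumber G π : ℝ) - meanX G) ^ 2)

/-- The standard normal cumulative distribution function. -/
noncomputable def Phi (z : ℝ) : ℝ :=
  ((ProbabilityTheory.gaussianReal 0 1) (Set.Iic z)).toReal

/-- Kolmogorov distance between a random variable of a uniform permutation and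
a standard Gaussian. -/
noncomputable def dKol {n : ℕ} (W : Equiv.Perm (Fin n) → ℝ) : ℝ :=
  ⨆ z : ℝ, |prob (fun π => W π ≤ z) - Phi z|

/-- The cycle graph on `n` vertices, with edges `{i, i+1 mod n}`. -/
def cycleG (n : ℕ) : SimpleGraph (Fin n) where
  Adj v w := v ≠ w ∧ (((v : ℕ) + 1) % n = (w : ℕ) ∨ ((w : ℕ) + 1) % n = (v : ℕ))
  symm := ⟨fun v w h => ⟨h.1.symm, h.2.symm⟩⟩
  loopless := ⟨fun v h => h.1 rfl⟩

instance (n : ℕ) : DecidableRel (cycleG n).Adj :=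
  fun _ _ => inferInstanceAs (Decidable (_ ∧ _))

instance {p q : Prop} [Decidable p] [Decidable q] : Decidable (Xor' p q) :=
  inferInstanceAs (Decidable (p ∧ ¬q ∨ q ∧ ¬p))

-- ==================== auxiliary lemmas ====================

set_option maxRecDepth 10000 in
lemma count8 : (univ.filter (fun σ : Equiv.Perm (Fin 4) =>
    Xor' (Btw (σ 0) (σ 1) (σ 2)) (Btw (σ 0) (σ 1) (σ 3)))).card = 8 := by decide

set_option maxRecDepth 100000 in
lemma master4 : ∀ ρ : Equiv.Perm (Fin 4), ∀ i j k l : Fin 4,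
    (((i = 0 ∧ j = 1 ∨ i = 1 ∧ j = 0) ∧ (k = 2 ∧ l = 3 ∨ k = 3 ∧ l = 2)) ∨
     ((i = 2 ∧ j = 3 ∨ i = 3 ∧ j = 2) ∧ (k = 0 ∧ l = 1 ∨ k = 1 ∧ l = 0))) →
    (Xor' (Btw (ρ i) (ρ j) (ρ k)) (Btw (ρ i) (ρ j) (ρ l)) ↔
     Xor' (Btw (ρ 0) (ρ 1) (ρ 2)) (Btw (ρ 0) (ρ 1) (ρ 3))) := by decide

lemma btw_strictMono {m n : ℕ} {f : Fin m → Fin n} (hf : StrictMono f) (x y z : Fin m) :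
    Btw (f x) (f y) (f z) ↔ Btw x y z := by
  unfold Btw
  rw [← hf.monotone.map_min, ← hf.monotone.map_max, hf.lt_iff_lt, hf.lt_iff_lt]

lemma exists_factor {n : ℕ} (u : Fin 4 → Fin n) (hu : Function.Injective u) :
    ∃ ρ : Equiv.Perm (Fin 4), ∀ x y z : Fin 4,
      (Btw (u x) (u y) (u z) ↔ Btw (ρ x) (ρ y) (ρ z)) := by
  classical
  set S : Finset (Fin n) := Finset.image u Finset.univ with hS
  have hcard : S.card = 4 := by
    rw [hS, Finset.card_image_of_injective _ hu, Finset.card_univ, Fintype.card_fin]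
  let φ := S.orderIsoOfFin hcard
  have hmem : ∀ i, u i ∈ S := fun i => Finset.mem_image_of_mem u (Finset.mem_univ i)
  let ρ0 : Fin 4 → Fin 4 := fun i => φ.symm ⟨u i, hmem i⟩
  have hρ0 : Function.Injective ρ0 := by
    intro i j h
    apply hu
    have h2 := congrArg φ h
    rw [φ.apply_symm_apply, φ.apply_symm_apply] at h2
    exact congrArg Subtype.val h2
  let ρ : Equiv.Perm (Fin 4) := Equiv.ofBijective ρ0 (Finite.injective_iff_bijective.mp hρ0)
  have hg : StrictMono (fun i : Fin 4 => ((φ i : S) : Fin n)) := by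
    intro i j hij
    exact φ.strictMono hij
  have key : ∀ i, u i = ((φ (ρ i) : S) : Fin n) := by
    intro i
    have : φ (ρ0 i) = ⟨u i, hmem i⟩ := φ.apply_symm_apply _
    simp [ρ, Equiv.ofBijective_apply, this]
  refine ⟨ρ, fun x y z => ?_⟩
  rw [key x, key y, key z, btw_strictMono hg]

lemma card_filter_mul_right {G : Type*} [Group G] [Fintype G] [DecidableEq G]
    (P : G → Prop) [DecidablePred P] (τ : G) :
    (univ.filter (fun g => P (g * τ))).card = (univ.filter P).card := by
  apply Finset.card_bij (fun g _ => g * τ)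
  · intro g hg
    simpa using (Finset.mem_filter.mp hg).2
  · intro g1 h1 g2 h2 h
    exact mul_right_cancel h
  · intro g hg
    exact ⟨g * τ⁻¹, by simpa using (Finset.mem_filter.mp hg).2, by simp⟩

lemma card_filter_mul_left {G : Type*} [Group G] [Fintype G] [DecidableEq G]
    (P : G → Prop) [DecidablePred P] (τ : G) :
    (univ.filter (fun g => P (τ * g))).card = (univ.filter P).card := by
  apply Finset.card_bij (fun g _ => τ * g)
  · intro g hg
    simpa using (Finset.mem_filter.mp hg).2
  · intro g1 h1 g2 h2 h
    exact mul_left_cancel h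
  · intro g hg
    exact ⟨τ⁻¹ * g, by simpa using (Finset.mem_filter.mp hg).2, by simp⟩

lemma count8' {n : ℕ} (u : Fin 4 → Fin n) (hu : Function.Injective u) :
    (univ.filter (fun σ : Equiv.Perm (Fin 4) =>
      Xor' (Btw (u (σ 0)) (u (σ 1)) (u (σ 2)))
           (Btw (u (σ 0)) (u (σ 1)) (u (σ 3))))).card = 8 := by
  obtain ⟨ρ, hρ⟩ := exists_factor u hu
  have heq : ∀ σ : Equiv.Perm (Fin 4),
      (Xor' (Btw (u (σ 0)) (u (σ 1)) (u (σ 2))) (Btw (u (σ 0)) (u (σ 1)) (u (σ 3)))) ↔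
      Xor' (Btw ((ρ * σ) 0) ((ρ * σ) 1) ((ρ * σ) 2))
           (Btw ((ρ * σ) 0) ((ρ * σ) 1) ((ρ * σ) 3)) := by
    intro σ
    simp only [Equiv.Perm.mul_apply]
    rw [hρ, hρ]
  rw [Finset.filter_congr (fun σ _ => heq σ)]
  rw [card_filter_mul_left (fun σ : Equiv.Perm (Fin 4) =>
    Xor' (Btw (σ 0) (σ 1) (σ 2)) (Btw (σ 0) (σ 1) (σ 3))) ρ]
  exact count8

lemma count_third {n : ℕ} {a b c d : Fin n}
    (hinj : Function.Injective ![a, b, c, d]) :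
    3 * (univ.filter (fun π : Equiv.Perm (Fin n) =>
        Xor' (Btw (π a) (π b) (π c)) (Btw (π a) (π b) (π d)))).card
      = Fintype.card (Equiv.Perm (Fin n)) := by
  classical
  set P : Equiv.Perm (Fin n) → Prop :=
    fun π => Xor' (Btw (π a) (π b) (π c)) (Btw (π a) (π b) (π d)) with hP
  let e : Fin 4 ↪ Fin n := ⟨![a, b, c, d], hinj⟩
  let emb : Equiv.Perm (Fin 4) → Equiv.Perm (Fin n) :=
    fun σ => σ.viaFintypeEmbedding e
  have hemb : ∀ (σ : Equiv.Perm (Fin 4)) (i : Fin 4), emb σ (e i) = e (σ i) :=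
    fun σ i => Equiv.Perm.viaFintypeEmbedding_apply_image σ e i
  have hswap :
      ∑ σ : Equiv.Perm (Fin 4),
        (univ.filter (fun π : Equiv.Perm (Fin n) => P (π * emb σ))).card
      = ∑ π : Equiv.Perm (Fin n),
        (univ.filter (fun σ : Equiv.Perm (Fin 4) => P (π * emb σ))).card := by
    simp only [Finset.card_filter]
    exact Finset.sum_comm
  have hL : ∑ σ : Equiv.Perm (Fin 4),
      (univ.filter (fun π : Equiv.Perm (Fin n) => P (π * emb σ))).card
      = 24 * (univ.filter P).card := by
    rw [Finset.sum_congr rfl (fun σ _ => card_filter_mul_right P (emb σ))]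
    rw [Finset.sum_const, Finset.card_univ]
    simp [Fintype.card_perm, Nat.factorial]
  have hR : ∀ π : Equiv.Perm (Fin n),
      (univ.filter (fun σ : Equiv.Perm (Fin 4) => P (π * emb σ))).card = 8 := by
    intro π
    have hu : Function.Injective (fun i => π (e i)) :=
      fun i j h => e.injective (π.injective h)
    have : ∀ σ : Equiv.Perm (Fin 4), P (π * emb σ) ↔
        Xor' (Btw (π (e (σ 0))) (π (e (σ 1))) (π (e (σ 2))))
             (Btw (π (e (σ 0))) (π (e (σ 1))) (π (e (σ 3)))) := by
      intro σ
      have ha : a = e 0 := rfl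
      have hb : b = e 1 := rfl
      have hc : c = e 2 := rfl
      have hd : d = e 3 := rfl
      rw [hP]
      simp only [Equiv.Perm.mul_apply]
      rw [ha, hb, hc, hd, hemb, hemb, hemb, hemb]
    rw [Finset.filter_congr (fun σ _ => this σ)]
    exact count8' (fun i => π (e i)) hu
  have hR' : ∑ π : Equiv.Perm (Fin n),
      (univ.filter (fun σ : Equiv.Perm (Fin 4) => P (π * emb σ))).card
      = Fintype.card (Equiv.Perm (Fin n)) * 8 := by
    rw [Finset.sum_congr rfl (fun π _ => hR π), Finset.sum_const, Finset.card_univ,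
      smul_eq_mul]
  have h24 : 24 * (univ.filter P).card = Fintype.card (Equiv.Perm (Fin n)) * 8 := by
    rw [← hL, hswap, hR']
  show 3 * (univ.filter P).card = _
  omega

lemma cross_iff {n : ℕ} (π : Equiv.Perm (Fin n)) {a b c d : Fin n}
    (hinj : Function.Injective ![a, b, c, d]) :
    IsCrossing π {Sym2.mk a b, Sym2.mk c d} ↔
      Xor' (Btw (π a) (π b) (π c)) (Btw (π a) (π b) (π d)) := by
  set u : Fin 4 → Fin n := ![a, b, c, d] with hu
  have h02 : a ≠ c := hinj.ne (by decide : (0 : Fin 4) ≠ 2)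
  have h03 : a ≠ d := hinj.ne (by decide : (0 : Fin 4) ≠ 3)
  constructor
  · rintro ⟨a', b', c', d', hset, hx⟩
    have hne : Sym2.mk a b ≠ Sym2.mk c d := by
      intro heq
      rcases Sym2.eq_iff.mp heq with ⟨h, h'⟩ | ⟨h, h'⟩
      · exact h02 h
      · exact h03 h
    have m1 : Sym2.mk a' b' = Sym2.mk a b ∨ Sym2.mk a' b' = Sym2.mk c d := by
      have : Sym2.mk a' b' ∈ ({Sym2.mk a b, Sym2.mk c d} : Finset (Sym2 (Fin n))) := by
        rw [hset]; simp
      simpa using this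
    have m2 : Sym2.mk c' d' = Sym2.mk a b ∨ Sym2.mk c' d' = Sym2.mk c d := by
      have : Sym2.mk c' d' ∈ ({Sym2.mk a b, Sym2.mk c d} : Finset (Sym2 (Fin n))) := by
        rw [hset]; simp
      simpa using this
    have mcd : Sym2.mk c d = Sym2.mk a' b' ∨ Sym2.mk c d = Sym2.mk c' d' := by
      have : Sym2.mk c d ∈ ({Sym2.mk a' b', Sym2.mk c' d'} : Finset (Sym2 (Fin n))) := by
        rw [← hset]; simp
      simpa using this
    have mab : Sym2.mk a b = Sym2.mk a' b' ∨ Sym2.mk a b = Sym2.mk c' d' := by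
      have : Sym2.mk a b ∈ ({Sym2.mk a' b', Sym2.mk c' d'} : Finset (Sym2 (Fin n))) := by
        rw [← hset]; simp
      simpa using this
    have hsplit : (Sym2.mk a' b' = Sym2.mk a b ∧ Sym2.mk c' d' = Sym2.mk c d) ∨
        (Sym2.mk a' b' = Sym2.mk c d ∧ Sym2.mk c' d' = Sym2.mk a b) := by
      rcases m1 with h1 | h1 <;> rcases m2 with h2 | h2
      · exfalso; rcases mcd with h | h
        · exact hne (h1 ▸ h).symm
        · exact hne (h2 ▸ h).symm
      · exact Or.inl ⟨h1, h2⟩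
      · exact Or.inr ⟨h1, h2⟩
      · exfalso; rcases mab with h | h
        · exact hne (h1 ▸ h)
        · exact hne (h2 ▸ h)
    have hidx : ∃ i j k l : Fin 4,
        ((((i = 0 ∧ j = 1 ∨ i = 1 ∧ j = 0) ∧ (k = 2 ∧ l = 3 ∨ k = 3 ∧ l = 2)) ∨
          ((i = 2 ∧ j = 3 ∨ i = 3 ∧ j = 2) ∧ (k = 0 ∧ l = 1 ∨ k = 1 ∧ l = 0)))) ∧
        a' = u i ∧ b' = u j ∧ c' = u k ∧ d' = u l := by
      rcases hsplit with ⟨h1, h2⟩ | ⟨h1, h2⟩ <;>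
        rw [Sym2.eq_iff] at h1 h2
      · rcases h1 with ⟨e1, e2⟩ | ⟨e1, e2⟩ <;> rcases h2 with ⟨e3, e4⟩ | ⟨e3, e4⟩
        · exact ⟨0, 1, 2, 3, by decide, e1, e2, e3, e4⟩
        · exact ⟨0, 1, 3, 2, by decide, e1, e2, e3, e4⟩
        · exact ⟨1, 0, 2, 3, by decide, e1, e2, e3, e4⟩
        · exact ⟨1, 0, 3, 2, by decide, e1, e2, e3, e4⟩
      · rcases h1 with ⟨e1, e2⟩ | ⟨e1, e2⟩ <;> rcases h2 with ⟨e3, e4⟩ | ⟨e3, e4⟩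
        · exact ⟨2, 3, 0, 1, by decide, e1, e2, e3, e4⟩
        · exact ⟨2, 3, 1, 0, by decide, e1, e2, e3, e4⟩
        · exact ⟨3, 2, 0, 1, by decide, e1, e2, e3, e4⟩
        · exact ⟨3, 2, 1, 0, by decide, e1, e2, e3, e4⟩
    obtain ⟨i, j, k, l, hpair, hi, hj, hk, hl⟩ := hidx
    have hv : Function.Injective (fun t => π (u t)) := fun s t h => hinj (π.injective h)
    obtain ⟨ρ, hρ⟩ := exists_factor (fun t => π (u t)) hv
    have goal_eq : (Xor' (Btw (π a) (π b) (π c)) (Btw (π a) (π b) (π d))) ↔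
        Xor' (Btw (ρ 0) (ρ 1) (ρ 2)) (Btw (ρ 0) (ρ 1) (ρ 3)) := by
      have e0 : a = u 0 := rfl
      have e1 : b = u 1 := rfl
      have e2 : c = u 2 := rfl
      have e3 : d = u 3 := rfl
      rw [e0, e1, e2, e3]
      rw [show (Btw (π (u 0)) (π (u 1)) (π (u 2))) ↔ Btw (ρ 0) (ρ 1) (ρ 2) from hρ 0 1 2,
          show (Btw (π (u 0)) (π (u 1)) (π (u 3))) ↔ Btw (ρ 0) (ρ 1) (ρ 3) from hρ 0 1 3]
    have hx_eq : (Xor' (Btw (π a') (π b') (π c')) (Btw (π a') (π b') (π d'))) ↔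
        Xor' (Btw (ρ i) (ρ j) (ρ k)) (Btw (ρ i) (ρ j) (ρ l)) := by
      rw [hi, hj, hk, hl]
      rw [show (Btw (π (u i)) (π (u j)) (π (u k))) ↔ Btw (ρ i) (ρ j) (ρ k) from hρ i j k,
          show (Btw (π (u i)) (π (u j)) (π (u l))) ↔ Btw (ρ i) (ρ j) (ρ l) from hρ i j l]
    rw [goal_eq, ← master4 ρ i j k l hpair, ← hx_eq]
    exact hx
  · intro h
    exact ⟨a, b, c, d, rfl, h⟩

lemma pair_eq {α : Type*} [DecidableEq α] {x y z w : α} (hzw : z ≠ w)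
    (h : ({x, y} : Finset α) = {z, w}) : (x = z ∧ y = w) ∨ (x = w ∧ y = z) := by
  have hx : x = z ∨ x = w := by
    have : x ∈ ({z, w} : Finset α) := h ▸ (by simp)
    simpa using this
  have hy : y = z ∨ y = w := by
    have : y ∈ ({z, w} : Finset α) := h ▸ (by simp)
    simpa using this
  have hz : z = x ∨ z = y := by
    have : z ∈ ({x, y} : Finset α) := by rw [h]; simp
    simpa using this
  have hw : w = x ∨ w = y := by
    have : w ∈ ({x, y} : Finset α) := by rw [h]; simp
    simpa using this
  rcases hx with hx | hx <;> rcases hy with hy | hy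
  · exfalso; rcases hw with hw | hw
    · exact hzw (hx ▸ hw.symm)
    · exact hzw (hy ▸ hw.symm)
  · exact Or.inl ⟨hx, hy⟩
  · exact Or.inr ⟨hx, hy⟩
  · exfalso; rcases hz with hz | hz
    · exact hzw (hz.symm ▸ hx)
    · exact hzw (hz.symm ▸ hy)

lemma inj4 {α : Type*} {a b c d : α} (h1 : a ≠ b) (h2 : a ≠ c) (h3 : a ≠ d)
    (h4 : b ≠ c) (h5 : b ≠ d) (h6 : c ≠ d) : Function.Injective ![a, b, c, d] := by
  intro x y h
  fin_cases x <;> fin_cases y <;> simp_all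

section Cycle
variable {n : ℕ} [NeZero n] (hn : 5 ≤ n)
include hn

lemma val_one_fin : ((1 : Fin n) : ℕ) = 1 := by
  rw [Fin.val_one']
  exact Nat.mod_eq_of_lt (by omega)

lemma one_ne_zero_fin : (1 : Fin n) ≠ 0 := by
  intro h
  have := congrArg Fin.val h
  rw [val_one_fin hn] at this
  simp at this

lemma two_ne_zero_fin : (1 + 1 : Fin n) ≠ 0 := by
  intro h
  have h2 := congrArg Fin.val h
  rw [Fin.val_add, val_one_fin hn, Nat.mod_eq_of_lt (by omega : 1 + 1 < n)] at h2
  simp at h2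

lemma succ_ne_self (i : Fin n) : i + 1 ≠ i := by
  intro h
  apply one_ne_zero_fin hn
  have h2 : i + 1 = i + 0 := by rw [add_zero]; exact h
  exact add_left_cancel h2

lemma succ_succ_ne_self (i : Fin n) : i + 1 + 1 ≠ i := by
  intro h
  apply two_ne_zero_fin hn
  have h2 : i + (1 + 1) = i + 0 := by rw [← add_assoc, add_zero]; exact h
  exact add_left_cancel h2

lemma key_mod (x y : Fin n) : (((x : ℕ) + 1) % n = (y : ℕ)) ↔ x + 1 = y := by
  rw [Fin.ext_iff, Fin.val_add, val_one_fin hn]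

lemma adj_iff (v w : Fin n) :
    (cycleG n).Adj v w ↔ v ≠ w ∧ (v + 1 = w ∨ w + 1 = v) := by
  show (v ≠ w ∧ _) ↔ _
  rw [key_mod hn v w, key_mod hn w v]

lemma edge_iff (e : Sym2 (Fin n)) :
    e ∈ (cycleG n).edgeFinset ↔ ∃ i : Fin n, e = Sym2.mk i (i + 1) := by
  rw [SimpleGraph.mem_edgeFinset]
  induction e using Sym2.ind with
  | _ v w =>
    rw [SimpleGraph.mem_edgeSet, adj_iff hn]
    constructor
    · rintro ⟨hne, h | h⟩
      · exact ⟨v, by rw [h]⟩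
      · exact ⟨w, by rw [h, Sym2.eq_swap]⟩
    · rintro ⟨i, hi⟩
      rw [Sym2.eq_iff] at hi
      rcases hi with ⟨h1, h2⟩ | ⟨h1, h2⟩
      · rw [h1, h2]
        exact ⟨(succ_ne_self hn i).symm, Or.inl rfl⟩
      · rw [h1, h2]
        exact ⟨succ_ne_self hn i, Or.inr rfl⟩

lemma E_inj {i j : Fin n} (h : Sym2.mk i (i + 1) = Sym2.mk j (j + 1)) : i = j := by
  rw [Sym2.eq_iff] at h
  rcases h with ⟨h1, _⟩ | ⟨h1, h2⟩
  · exact h1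
  · exact absurd (by rw [← h1, h2] : j + 1 + 1 = j) (succ_succ_ne_self hn j)

lemma E_ne {i j : Fin n} (h1 : j ≠ i) (h3 : i ≠ j + 1) :
    Sym2.mk i (i + 1) ≠ Sym2.mk j (j + 1) := by
  intro h
  rw [Sym2.eq_iff] at h
  rcases h with ⟨h', _⟩ | ⟨h', _⟩
  · exact h1 h'.symm
  · exact h3 h'

omit hn in
lemma disj_iff (i j : Fin n) :
    (∀ v : Fin n, ¬(v ∈ Sym2.mk i (i + 1) ∧ v ∈ Sym2.mk j (j + 1))) ↔
      (j ≠ i ∧ j ≠ i + 1 ∧ i ≠ j + 1) := by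
  simp only [Sym2.mem_iff]
  constructor
  · intro h
    refine ⟨?_, ?_, ?_⟩
    · intro he; exact h j ⟨Or.inl he, Or.inl rfl⟩
    · intro he; exact h j ⟨Or.inr he, Or.inl rfl⟩
    · intro he; exact h i ⟨Or.inl rfl, Or.inr he⟩
  · rintro ⟨h1, h2, h3⟩ v ⟨hv1, hv2⟩
    rcases hv1 with hv1 | hv1 <;> rcases hv2 with hv2 | hv2
    · exact h1 (hv2.symm.trans hv1)
    · exact h3 (hv1.symm.trans hv2)
    · exact h2 (hv2.symm.trans hv1)
    · exact h1 (add_right_cancel (hv1.symm.trans hv2)).symm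

lemma mem_matchings_cycle (s : Finset (Sym2 (Fin n))) :
    s ∈ matchings (cycleG n) 2 ↔
      ∃ i j : Fin n, (j ≠ i ∧ j ≠ i + 1 ∧ i ≠ j + 1) ∧
        s = {Sym2.mk i (i + 1), Sym2.mk j (j + 1)} := by
  rw [matchings, Finset.mem_filter, Finset.mem_powersetCard]
  constructor
  · rintro ⟨⟨hsub, hcard⟩, hdisj⟩
    obtain ⟨e, f, hef, rfl⟩ := Finset.card_eq_two.mp hcard
    obtain ⟨i, hi⟩ := (edge_iff hn e).mp (hsub (by simp))
    obtain ⟨j, hj⟩ := (edge_iff hn f).mp (hsub (by simp))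
    refine ⟨i, j, ?_, by rw [hi, hj]⟩
    rw [← disj_iff]
    intro v hv
    have := hdisj e (by simp) f (by simp) hef v
    rw [hi, hj] at this
    exact this hv
  · rintro ⟨i, j, hD, rfl⟩
    have hne : Sym2.mk i (i + 1) ≠ Sym2.mk j (j + 1) := E_ne hn hD.1 hD.2.2
    refine ⟨⟨?_, ?_⟩, ?_⟩
    · intro e he
      simp only [Finset.mem_insert, Finset.mem_singleton] at he
      rcases he with rfl | rfl
      · exact (edge_iff hn _).mpr ⟨i, rfl⟩
      · exact (edge_iff hn _).mpr ⟨j, rfl⟩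
    · rw [Finset.card_insert_of_notMem (by simpa using hne), Finset.card_singleton]
    · intro e he f hf hef v
      simp only [Finset.mem_insert, Finset.mem_singleton] at he hf
      rcases he with rfl | rfl <;> rcases hf with rfl | rfl
      · exact absurd rfl hef
      · exact (disj_iff i j).mpr hD v
      · exact (disj_iff j i).mpr ⟨hD.1.symm, hD.2.2, hD.2.1⟩ v
      · exact absurd rfl hef

lemma card_filter_cond (i : Fin n) :
    (univ.filter (fun j : Fin n => j ≠ i ∧ j ≠ i + 1 ∧ i ≠ j + 1)).card = n - 3 := by
  have hsub : i - 1 + 1 = i := by rw [sub_add_cancel]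
  have hcond : ∀ j : Fin n, (j ≠ i ∧ j ≠ i + 1 ∧ i ≠ j + 1) ↔
      j ∉ ({i, i + 1, i - 1} : Finset (Fin n)) := by
    intro j
    simp only [Finset.mem_insert, Finset.mem_singleton, not_or]
    constructor
    · rintro ⟨h1, h2, h3⟩
      exact ⟨h1, h2, fun he => h3 (by rw [he, hsub])⟩
    · rintro ⟨h1, h2, h3⟩
      refine ⟨h1, h2, fun he => h3 ?_⟩
      rw [he]
      rw [add_sub_cancel_right]
  have hF : ({i, i + 1, i - 1} : Finset (Fin n)).card = 3 := by
    rw [Finset.card_insert_of_notMem, Finset.card_insert_of_notMem, Finset.card_singleton]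
    · simp only [Finset.mem_singleton]
      intro h
      apply succ_succ_ne_self hn (i - 1)
      rw [hsub, ← h]
    · simp only [Finset.mem_insert, Finset.mem_singleton, not_or]
      constructor
      · exact fun h => succ_ne_self hn i h.symm
      · intro h
        apply succ_ne_self hn (i - 1)
        rw [hsub, ← h]
  rw [Finset.filter_congr (fun j _ => hcond j), Finset.filter_not]
  have h1 : univ.filter (fun j => j ∈ ({i, i + 1, i - 1} : Finset (Fin n))) =
      ({i, i + 1, i - 1} : Finset (Fin n)) := by
    ext x; simp
  rw [h1, Finset.card_sdiff_of_subset (Finset.subset_univ _), Finset.card_univ, Fintype.card_fin, hF]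

lemma card_matchings_cycle : 2 * (matchings (cycleG n) 2).card = n * (n - 3) := by
  classical
  set T : Finset (Fin n × Fin n) :=
    univ.filter (fun p : Fin n × Fin n => p.2 ≠ p.1 ∧ p.2 ≠ p.1 + 1 ∧ p.1 ≠ p.2 + 1) with hT
  have hTcard : T.card = n * (n - 3) := by
    rw [hT, Finset.card_filter, Fintype.sum_prod_type]
    have : ∀ i : Fin n, (∑ j : Fin n,
        if (j ≠ i ∧ j ≠ i + 1 ∧ i ≠ j + 1) then 1 else 0) = n - 3 := by
      intro i
      rw [← Finset.card_filter]
      exact card_filter_cond hn i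
    rw [Finset.sum_congr rfl (fun i _ => this i), Finset.sum_const, Finset.card_univ,
      Fintype.card_fin, smul_eq_mul]
  have hmap : ∀ p ∈ T, ({Sym2.mk p.1 (p.1 + 1), Sym2.mk p.2 (p.2 + 1)} :
      Finset (Sym2 (Fin n))) ∈ matchings (cycleG n) 2 := by
    intro p hp
    rw [hT, Finset.mem_filter] at hp
    exact (mem_matchings_cycle hn _).mpr ⟨p.1, p.2, hp.2, rfl⟩
  have hfiber := Finset.card_eq_sum_card_fiberwise hmap
  have h2 : ∀ s ∈ matchings (cycleG n) 2,
      (T.filter (fun p => ({Sym2.mk p.1 (p.1 + 1), Sym2.mk p.2 (p.2 + 1)} :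
        Finset (Sym2 (Fin n))) = s)).card = 2 := by
    intro s hs
    obtain ⟨i, j, hD, rfl⟩ := (mem_matchings_cycle hn s).mp hs
    have hfe : T.filter (fun p => ({Sym2.mk p.1 (p.1 + 1), Sym2.mk p.2 (p.2 + 1)} :
        Finset (Sym2 (Fin n))) = {Sym2.mk i (i + 1), Sym2.mk j (j + 1)}) =
        ({(i, j), (j, i)} : Finset (Fin n × Fin n)) := by
      ext p
      rw [Finset.mem_filter, hT, Finset.mem_filter]
      simp only [Finset.mem_univ, true_and, Finset.mem_insert, Finset.mem_singleton]
      constructor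
      · rintro ⟨hDp, heq⟩
        rcases pair_eq (E_ne hn hD.1 hD.2.2) heq with ⟨e1, e2⟩ | ⟨e1, e2⟩
        · left; exact Prod.ext (E_inj hn e1) (E_inj hn e2)
        · right; exact Prod.ext (E_inj hn e1) (E_inj hn e2)
      · rintro (rfl | h)
        · exact ⟨hD, rfl⟩
        · rw [h]
          exact ⟨⟨hD.1.symm, hD.2.2, hD.2.1⟩, Finset.pair_comm _ _⟩
    rw [hfe, Finset.card_insert_of_notMem, Finset.card_singleton]
    simp only [Finset.mem_singleton]
    intro h
    simp only [Prod.mk.injEq] at h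
    exact hD.1 h.2
  rw [Finset.sum_congr rfl h2, Finset.sum_const, smul_eq_mul] at hfiber
  rw [← hTcard, hfiber, mul_comm]
end Cycle

/-- Mean number of crossings of a random embedding of the cycle graph. -/
theorem mean_crossings_cycle (n : ℕ) (hn : 5 ≤ n) :
    meanX (cycleG n) = (n : ℝ) * ((n : ℝ) - 3) / 6 := by
  haveI : NeZero n := ⟨by omega⟩
  classical
  have hcount : ∀ s ∈ matchings (cycleG n) 2,
      3 * (univ.filter (fun π : Equiv.Perm (Fin n) => IsCrossing π s)).card
        = Fintype.card (Equiv.Perm (Fin n)) := by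
    intro s hs
    obtain ⟨i, j, hD, rfl⟩ := (mem_matchings_cycle hn s).mp hs
    have hinj : Function.Injective ![i, i + 1, j, j + 1] := by
      apply inj4
      · exact (succ_ne_self hn i).symm
      · exact hD.1.symm
      · exact hD.2.2
      · exact fun h => hD.2.1 h.symm
      · intro h; exact hD.1 (add_right_cancel h).symm
      · exact (succ_ne_self hn j).symm
    rw [Finset.filter_congr (fun π _ => cross_iff π hinj)]
    exact count_third hinj
  have hswap : ∑ π : Equiv.Perm (Fin n), crossingNumber (cycleG n) π =
      ∑ s ∈ matchings (cycleG n) 2,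
        (univ.filter (fun π : Equiv.Perm (Fin n) => IsCrossing π s)).card := by
    unfold crossingNumber
    simp only [Finset.card_filter]
    exact Finset.sum_comm
  have key : 3 * ∑ π : Equiv.Perm (Fin n), crossingNumber (cycleG n) π =
      (matchings (cycleG n) 2).card * Fintype.card (Equiv.Perm (Fin n)) := by
    rw [hswap, Finset.mul_sum, Finset.sum_congr rfl hcount, Finset.sum_const, smul_eq_mul]
  have hM := card_matchings_cycle hn
  have hNpos : 0 < Fintype.card (Equiv.Perm (Fin n)) := Fintype.card_pos
  unfold meanX expect
  have hcast : (∑ π : Equiv.Perm (Fin n), (crossingNumber (cycleG n) π : ℝ)) =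
      ((∑ π : Equiv.Perm (Fin n), crossingNumber (cycleG n) π : ℕ) : ℝ) := by
    push_cast; rfl
  rw [hcast]
  set S : ℕ := ∑ π : Equiv.Perm (Fin n), crossingNumber (cycleG n) π with hS
  set N : ℕ := Fintype.card (Equiv.Perm (Fin n)) with hNdef
  set M : ℕ := (matchings (cycleG n) 2).card with hMdef
  have e1 : (3 : ℝ) * S = M * N := by exact_mod_cast key
  have e2 : (2 : ℝ) * M = n * ((n : ℝ) - 3) := by
    have h3 : (3 : ℕ) ≤ n := by omega
    have hc : ((2 * M : ℕ) : ℝ) = ((n * (n - 3) : ℕ) : ℝ) := by exact_mod_cast hM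
    push_cast [Nat.cast_sub h3] at hc
    linarith [hc]
  have hNne : (N : ℝ) ≠ 0 := Nat.cast_ne_zero.mpr hNpos.ne'
  rw [div_eq_div_iff hNne (by norm_num : (6 : ℝ) ≠ 0)]
  linear_combination (2 : ℝ) * e1 + (N : ℝ) * e2

end RandomCrossings
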